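/- Let Z₁,…,Z_n be random variables with E exp(Z_i²/K²) ≤ c₁ for all i, where K > 0. Then E (1/k) Σ_{i=1}^k (Z_i*)² ≤ K² log(c₁ n/k), where Z_i* is the non-increasing rearrangement of |Z_i|. -/

import Mathlib

open MeasureTheory Real Finset

/-- Sum of squares of the k largest-magnitude entries of v. -/
noncomputable def topkSq {n : ℕ} (k : ℕ) (v : Fin n → ℝ) : ℝ :=
  sSup {c : ℝ | ∃ I : Finset (Fin n), I.card = k ∧ c = ∑ i ∈ I, v i ^ 2}

lemma sum_log_le {ι : Type*} (I : Finset ι) (k : ℕ) (hk : 1 ≤ k) (hcard : I.card = k)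
    (a : ι → ℝ) (ha : ∀ i ∈ I, 0 < a i) :
    ∑ i ∈ I, Real.log (a i) ≤ k * Real.log ((∑ i ∈ I, a i) / k) := by
  have hk0 : (0:ℝ) < k := by exact_mod_cast hk
  have hw : ∑ _i ∈ I, (1/(k:ℝ)) = 1 := by
    simp [hcard, mul_one_div, mul_inv_cancel₀ hk0.ne']
  have h := Real.geom_mean_le_arith_mean_weighted I (fun _ => 1/(k:ℝ)) a
    (fun i _ => by positivity) hw (fun i hi => (ha i hi).le)
  have hprod : (0:ℝ) < ∏ i ∈ I, a i ^ (1/(k:ℝ)) :=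
    Finset.prod_pos (fun i hi => Real.rpow_pos_of_pos (ha i hi) _)
  have hlog := Real.log_le_log hprod h
  rw [Real.log_prod (fun i hi => (Real.rpow_pos_of_pos (ha i hi) _).ne')] at hlog
  have : ∑ i ∈ I, Real.log (a i ^ (1/(k:ℝ))) = (1/(k:ℝ)) * ∑ i ∈ I, Real.log (a i) := by
    rw [Finset.mul_sum]
    exact Finset.sum_congr rfl (fun i hi => Real.log_rpow (ha i hi) _)
  rw [this] at hlog
  have hsum : ∑ i ∈ I, (1/(k:ℝ)) * a i = (∑ i ∈ I, a i) / k := by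
    rw [← Finset.mul_sum]; ring
  rw [hsum] at hlog
  calc ∑ i ∈ I, Real.log (a i) = k * ((1/(k:ℝ)) * ∑ i ∈ I, Real.log (a i)) := by
        field_simp
    _ ≤ k * Real.log ((∑ i ∈ I, a i) / k) :=
        mul_le_mul_of_nonneg_left hlog hk0.le

lemma topkSq_le {n k : ℕ} (hk : 1 ≤ k) (hkn : k ≤ n) (K : ℝ) (hK : 0 < K)
    (v : Fin n → ℝ) :
    topkSq k v ≤ (k : ℝ) * K ^ 2 *
      Real.log ((∑ i : Fin n, Real.exp (v i ^ 2 / K ^ 2)) / k) := by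
  have hk0 : (0:ℝ) < k := by exact_mod_cast hk
  obtain ⟨I₀, _, hI₀⟩ := Finset.exists_subset_card_eq (s := (univ : Finset (Fin n))) (n := k)
    (by simpa using hkn)
  refine csSup_le ⟨_, I₀, hI₀, rfl⟩ ?_
  rintro c ⟨I, hIcard, rfl⟩
  have ha : ∀ i ∈ I, (0:ℝ) < Real.exp (v i ^ 2 / K ^ 2) := fun i _ => Real.exp_pos _
  have h1 : ∑ i ∈ I, v i ^ 2 = K ^ 2 * ∑ i ∈ I, Real.log (Real.exp (v i ^ 2 / K ^ 2)) := by
    rw [Finset.mul_sum]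
    refine Finset.sum_congr rfl (fun i _ => ?_)
    rw [Real.log_exp]
    field_simp
  have h2 := sum_log_le I k hk hIcard (fun i => Real.exp (v i ^ 2 / K ^ 2)) ha
  have hsub : (∑ i ∈ I, Real.exp (v i ^ 2 / K ^ 2)) ≤
      ∑ i : Fin n, Real.exp (v i ^ 2 / K ^ 2) :=
    Finset.sum_le_sum_of_subset_of_nonneg (Finset.subset_univ I)
      (fun i _ _ => (Real.exp_pos _).le)
  have hpos : (0:ℝ) < (∑ i ∈ I, Real.exp (v i ^ 2 / K ^ 2)) / k := by
    apply div_pos _ hk0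
    have : I.Nonempty := Finset.card_pos.mp (by omega)
    exact Finset.sum_pos ha this
  have h3 : Real.log ((∑ i ∈ I, Real.exp (v i ^ 2 / K ^ 2)) / k) ≤
      Real.log ((∑ i : Fin n, Real.exp (v i ^ 2 / K ^ 2)) / k) :=
    Real.log_le_log hpos (by gcongr)
  calc ∑ i ∈ I, v i ^ 2
      ≤ K ^ 2 * ((k:ℝ) * Real.log ((∑ i ∈ I, Real.exp (v i ^ 2 / K ^ 2)) / k)) := by
        rw [h1]; exact mul_le_mul_of_nonneg_left h2 (by positivity)
    _ ≤ (k : ℝ) * K ^ 2 * Real.log ((∑ i : Fin n, Real.exp (v i ^ 2 / K ^ 2)) / k) := by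
        rw [show K ^ 2 * ((k:ℝ) * Real.log ((∑ i ∈ I, Real.exp (v i ^ 2 / K ^ 2)) / k))
            = (k:ℝ) * K ^ 2 * Real.log ((∑ i ∈ I, Real.exp (v i ^ 2 / K ^ 2)) / k) by ring]
        exact mul_le_mul_of_nonneg_left h3 (by positivity)

theorem stmt7 {Ω : Type} [MeasurableSpace Ω] (μ : Measure Ω) [IsProbabilityMeasure μ]
    (n k : ℕ) (hk : 1 ≤ k) (hkn : k ≤ n)
    (Z : Fin n → Ω → ℝ) (hmeas : ∀ i, Measurable (Z i))
    (K c₁ : ℝ) (hK : 0 < K) (hc₁ : 0 < c₁)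
    (hint : ∀ i, Integrable (fun ω => Real.exp (Z i ω ^ 2 / K ^ 2)) μ)
    (hexp : ∀ i, (∫ ω, Real.exp (Z i ω ^ 2 / K ^ 2) ∂μ) ≤ c₁)
    (hinttop : Integrable (fun ω => topkSq k (fun i => Z i ω)) μ) :
    (∫ ω, (1 / (k : ℝ)) * topkSq k (fun i => Z i ω) ∂μ) ≤
      K ^ 2 * Real.log (c₁ * n / k) := by
  have hk0 : (0:ℝ) < k := by exact_mod_cast hk
  set g : Ω → ℝ := fun ω => (∑ i : Fin n, Real.exp (Z i ω ^ 2 / K ^ 2)) / k with hg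
  have hg_int : Integrable g μ :=
    (integrable_finset_sum univ (fun i _ => hint i)).div_const _
  have hg_ge : ∀ ω, (1:ℝ) ≤ g ω := by
    intro ω
    have hsum : (k:ℝ) ≤ ∑ i : Fin n, Real.exp (Z i ω ^ 2 / K ^ 2) := by
      calc (k:ℝ) ≤ (n:ℝ) := by exact_mod_cast hkn
        _ = ∑ _i : Fin n, (1:ℝ) := by simp
        _ ≤ _ := Finset.sum_le_sum (fun i _ => Real.one_le_exp (by positivity))
    rw [hg, le_div_iff₀ hk0, one_mul]
    exact hsum
  set m : ℝ := ∫ ω, g ω ∂μ with hm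
  have hm1 : (1:ℝ) ≤ m := by
    calc (1:ℝ) = ∫ _ω, (1:ℝ) ∂μ := by simp
      _ ≤ m := integral_mono (integrable_const 1) hg_int hg_ge
  have hm0 : (0:ℝ) < m := lt_of_lt_of_le one_pos hm1
  have hm_le : m ≤ c₁ * n / k := by
    rw [hm]
    have : ∫ ω, g ω ∂μ = (∑ i : Fin n, ∫ ω, Real.exp (Z i ω ^ 2 / K ^ 2) ∂μ) / k := by
      rw [hg]
      simp only [integral_div]
      rw [integral_finset_sum univ (fun i _ => hint i)]
    rw [this]
    gcongr
    calc ∑ i : Fin n, ∫ ω, Real.exp (Z i ω ^ 2 / K ^ 2) ∂μ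
        ≤ ∑ _i : Fin n, c₁ := Finset.sum_le_sum (fun i _ => hexp i)
      _ = c₁ * n := by simp [mul_comm]
  -- pointwise bound
  have hpt : ∀ ω, (1 / (k : ℝ)) * topkSq k (fun i => Z i ω)
      ≤ K ^ 2 * (Real.log m - 1) + (K ^ 2 / m) * g ω := by
    intro ω
    have h1 := topkSq_le hk hkn K hK (fun i => Z i ω)
    have h2 : (1 / (k : ℝ)) * topkSq k (fun i => Z i ω) ≤ K ^ 2 * Real.log (g ω) := by
      have := mul_le_mul_of_nonneg_left h1 (le_of_lt (by positivity : (0:ℝ) < 1/(k:ℝ)))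
      calc (1 / (k : ℝ)) * topkSq k (fun i => Z i ω)
          ≤ (1/(k:ℝ)) * ((k : ℝ) * K ^ 2 * Real.log ((∑ i : Fin n, Real.exp (Z i ω ^ 2 / K ^ 2)) / k)) := this
        _ = K ^ 2 * Real.log (g ω) := by rw [hg]; field_simp
    have hgpos : (0:ℝ) < g ω := lt_of_lt_of_le one_pos (hg_ge ω)
    have h3 : Real.log (g ω) ≤ Real.log m + (g ω / m - 1) := by
      have := Real.log_le_sub_one_of_pos (div_pos hgpos hm0)
      rw [Real.log_div hgpos.ne' hm0.ne'] at this
      linarith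
    calc (1 / (k : ℝ)) * topkSq k (fun i => Z i ω) ≤ K ^ 2 * Real.log (g ω) := h2
      _ ≤ K ^ 2 * (Real.log m + (g ω / m - 1)) :=
          mul_le_mul_of_nonneg_left h3 (by positivity)
      _ = K ^ 2 * (Real.log m - 1) + (K ^ 2 / m) * g ω := by field_simp; ring
  have hrhs_int : Integrable (fun ω => K ^ 2 * (Real.log m - 1) + (K ^ 2 / m) * g ω) μ :=
    (integrable_const _).add (hg_int.const_mul _)
  have hmain : (∫ ω, (1 / (k : ℝ)) * topkSq k (fun i => Z i ω) ∂μ)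
      ≤ ∫ ω, (K ^ 2 * (Real.log m - 1) + (K ^ 2 / m) * g ω) ∂μ :=
    integral_mono (hinttop.const_mul _) hrhs_int hpt
  have hval : (∫ ω, (K ^ 2 * (Real.log m - 1) + (K ^ 2 / m) * g ω) ∂μ)
      = K ^ 2 * Real.log m := by
    rw [integral_add (integrable_const _) (hg_int.const_mul _), integral_const,
      integral_const_mul, ← hm]
    simp only [measure_univ, probReal_univ, ENNReal.toReal_one, smul_eq_mul, one_mul]
    field_simp
    ring
  have hfin : K ^ 2 * Real.log m ≤ K ^ 2 * Real.log (c₁ * n / k) :=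
    mul_le_mul_of_nonneg_left (Real.log_le_log hm0 hm_le) (by positivity)
  linarith [hmain, hval.symm.le]
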